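/- Let m_1, …, m_N be real polynomials with nonzero leading coefficients d_1, …, d_N, let l_1, …, l_N be nonzero real numbers, define b_0 = 1/d_1, a_0(z) = (z m_1(z) − 1/l_1)/d_1 and, for 1 ≤ j ≤ N−1, b_j = 1/(l_j² d_j d_{j+1}), a_j(z) = (z m_{j+1}(z) − (1/l_j + 1/l_{j+1}))/d_{j+1}; let P_{n_j}, Q_{n_j} be the polynomials of the first and second kind for these parameters, assume P_{n_j}(0) ≠ 0 for all j, and let P^+_j, Q^+_j be the corresponding Stieltjes polynomials. Then the functions u_j = Q^+_j and v_j = P^+_j solve the difference system y_{2i} − y_{2i−2} = l_i y_{2i−1}, y_{2i+1} − y_{2i−1} = −z m_{i+1}(z) y_{2i} with initial conditions u_{−1} ≡ 1, u_0 ≡ 0, v_{−1} ≡ 0, v_0 ≡ 1; equivalently, for i = 1, …, N: P^+_{2i−1}(z) = −z m_i(z) P^+_{2i−2}(z) + P^+_{2i−3}(z), P^+_{2i}(z) = l_i P^+_{2i−1}(z) + P^+_{2i−2}(z), Q^+_{2i−1}(z) = −z m_i(z) Q^+_{2i−2}(z) + Q^+_{2i−3}(z), and Q^+_{2i}(z)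 = l_i Q^+_{2i−1}(z) + Q^+_{2i−2}(z). -/

import Mathlib

open Polynomial Finset

noncomputable section

/-- Proposition 5.4: the Stieltjes polynomials `Q^+_j`, `P^+_j` solve the difference system
`y_{2i} - y_{2i-2} = l_i y_{2i-1}`, `y_{2i+1} - y_{2i-1} = -z m_{i+1}(z) y_{2i}` with the
initial conditions `u_{-1} ≡ 1, u_0 ≡ 0, v_{-1} ≡ 0, v_0 ≡ 1`.  Indices are shifted by one:
`P (j+1) = P_{n_j}`, `Q (j+1) = Q_{n_j}`, `Pp (j+1) = P^+_j`, `Qp (j+1) = Q^+_j`. -/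
theorem stieltjes_polynomials_solve_difference_system
    (N : ℕ) (hN : 1 ≤ N) (m : ℕ → Polynomial ℝ) (l : ℕ → ℝ) (d : ℕ → ℝ)
    (hd : ∀ j, 1 ≤ j → j ≤ N → d j = (m j).leadingCoeff)
    (hd0 : ∀ j, 1 ≤ j → j ≤ N → d j ≠ 0)
    (hl0 : ∀ j, 1 ≤ j → j ≤ N → l j ≠ 0)
    (b : ℕ → ℝ) (a : ℕ → Polynomial ℝ)
    (hb0 : b 0 = (d 1)⁻¹)
    (ha0 : a 0 = Polynomial.C (d 1)⁻¹ * (Polynomial.X * m 1 - Polynomial.C (l 1)⁻¹))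
    (hb : ∀ j, 1 ≤ j → j ≤ N - 1 → b j = ((l j) ^ 2 * d j * d (j + 1))⁻¹)
    (ha : ∀ j, 1 ≤ j → j ≤ N - 1 → a j =
      Polynomial.C (d (j + 1))⁻¹ *
        (Polynomial.X * m (j + 1) - Polynomial.C ((l j)⁻¹ + (l (j + 1))⁻¹)))
    (P Q : ℕ → Polynomial ℝ)
    (hP0 : P 0 = 0) (hP1 : P 1 = 1) (hQ0 : Q 0 = -1) (hQ1 : Q 1 = 0)
    (hPrec : ∀ j, j ≤ N - 1 → P (j + 2) = a j * P (j + 1) - Polynomial.C (b j) * P j)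
    (hQrec : ∀ j, j ≤ N - 1 → Q (j + 2) = a j * Q (j + 1) - Polynomial.C (b j) * Q j)
    (hPn0 : ∀ j, j ≤ N → (P (j + 1)).eval 0 ≠ 0)
    (Pp Qp : ℕ → Polynomial ℝ)
    (hPp0 : Pp 0 = 0) (hPp1 : Pp 1 = 1) (hQp0 : Qp 0 = 1) (hQp1 : Qp 1 = 0)
    (hPpodd : ∀ i, 1 ≤ i → i ≤ N → Pp (2 * i) =
      Polynomial.C (-(∏ t ∈ Finset.range i, b t)⁻¹) *
        (P (i + 1) * Polynomial.C ((P i).eval 0) - P i * Polynomial.C ((P (i + 1)).eval 0)))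
    (hPpeven : ∀ i, 1 ≤ i → i ≤ N → Pp (2 * i + 1) =
      Polynomial.C ((P (i + 1)).eval 0)⁻¹ * P (i + 1))
    (hQpodd : ∀ i, 1 ≤ i → i ≤ N → Qp (2 * i) =
      Polynomial.C (∏ t ∈ Finset.range i, b t)⁻¹ *
        (Q (i + 1) * Polynomial.C ((P i).eval 0) - Q i * Polynomial.C ((P (i + 1)).eval 0)))
    (hQpeven : ∀ i, 1 ≤ i → i ≤ N → Qp (2 * i + 1) =
      -(Polynomial.C ((P (i + 1)).eval 0)⁻¹ * Q (i + 1))) :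
    ∀ i, 1 ≤ i → i ≤ N →
      (Pp (2 * i) = -(Polynomial.X * m i) * Pp (2 * i - 1) + Pp (2 * i - 2) ∧
        Pp (2 * i + 1) = Polynomial.C (l i) * Pp (2 * i) + Pp (2 * i - 1)) ∧
      (Qp (2 * i) = -(Polynomial.X * m i) * Qp (2 * i - 1) + Qp (2 * i - 2) ∧
        Qp (2 * i + 1) = Polynomial.C (l i) * Qp (2 * i) + Qp (2 * i - 1)) := by
  -- nonvanishing of the `b j`
  have hbne : ∀ j, j ≤ N - 1 → b j ≠ 0 := by
    intro j hj
    rcases Nat.eq_zero_or_pos j with h0 | h1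
    · subst h0; rw [hb0]; exact inv_ne_zero (hd0 1 le_rfl hN)
    · have hjN : j ≤ N := by omega
      have hj1N : j + 1 ≤ N := by omega
      rw [hb j h1 hj]
      exact inv_ne_zero (mul_ne_zero (mul_ne_zero (pow_ne_zero _ (hl0 j h1 hjN))
        (hd0 j h1 hjN)) (hd0 _ (by omega) hj1N))
  have hpi : ∀ i, i ≤ N → (∏ t ∈ Finset.range i, b t) ≠ 0 := by
    intro i hi
    exact Finset.prod_ne_zero_iff.mpr (fun t ht => hbne t (by
      simp only [Finset.mem_range] at ht; omega))
  have hene : ∀ i, 1 ≤ i → i ≤ N + 1 → (P i).eval 0 ≠ 0 := by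
    intro i h1 h2
    have h := hPn0 (i - 1) (by omega)
    rwa [Nat.sub_add_cancel h1] at h
  have hP1e : (P 1).eval 0 = 1 := by rw [hP1]; simp
  -- the key one-step recurrence for the values at 0
  have he : ∀ i, 1 ≤ i → i ≤ N →
      (P (i + 1)).eval 0 = -((d i * l i)⁻¹ * (P i).eval 0) := by
    intro i h1
    induction i, h1 using Nat.le_induction with
    | base =>
      intro h2
      have h2' : P 2 = a 0 := by rw [hPrec 0 (by omega), hP1, hP0]; ring
      rw [h2', ha0, hP1e]
      have hd1 := hd0 1 le_rfl hN
      have hl1 := hl0 1 le_rfl hN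
      simp only [eval_mul, eval_sub, eval_C, eval_X, zero_mul]
      field_simp
      ring
    | succ i hi ih =>
      intro h2
      have hiN : i ≤ N := by omega
      have ih' := ih hiN
      have hrec := hPrec i (by omega)
      rw [ha i hi (by omega)] at hrec
      have hev := congrArg (Polynomial.eval 0) hrec
      simp only [eval_mul, eval_sub, eval_add, eval_C, eval_X, zero_mul, zero_sub] at hev
      rw [hb i hi (by omega)] at hev
      have hdi := hd0 i hi hiN
      have hdi1 := hd0 (i + 1) (by omega) h2
      have hli := hl0 i hi hiN
      have hli1 := hl0 (i + 1) (by omega) h2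
      have hei1 : (P i).eval 0 = -(d i * l i) * (P (i + 1)).eval 0 := by
        rw [ih']; field_simp
      rw [hev, ih', hei1]
      field_simp
      ring
  -- the square identity
  have hsq : ∀ i, 1 ≤ i → i ≤ N →
      (P i).eval 0 * (P i).eval 0 = (∏ t ∈ Finset.range i, b t) * d i := by
    intro i h1
    induction i, h1 using Nat.le_induction with
    | base =>
      intro h2
      have hd1 := hd0 1 le_rfl hN
      rw [hP1e]
      simp [hb0]
      field_simp
    | succ i hi ih =>
      intro h2
      have hiN : i ≤ N := by omega
      have ih' := ih hiN
      rw [he i hi hiN, Finset.prod_range_succ, hb i hi (by omega)]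
      have hdi := hd0 i hi hiN
      have hdi1 := hd0 (i + 1) (by omega) h2
      have hli := hl0 i hi hiN
      field_simp
      linear_combination ih'
  -- extended formulas (valid also for i = 0)
  have hPpodd' : ∀ i, i ≤ N → Pp (2 * i) =
      Polynomial.C (-(∏ t ∈ Finset.range i, b t)⁻¹) *
        (P (i + 1) * Polynomial.C ((P i).eval 0) - P i * Polynomial.C ((P (i + 1)).eval 0)) := by
    intro i hi
    rcases Nat.eq_zero_or_pos i with h0 | h1
    · subst h0; simp [hPp0, hP0]
    · exact hPpodd i h1 hi
  have hPpeven' : ∀ i, i ≤ N → Pp (2 * i + 1) =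
      Polynomial.C ((P (i + 1)).eval 0)⁻¹ * P (i + 1) := by
    intro i hi
    rcases Nat.eq_zero_or_pos i with h0 | h1
    · subst h0; simp [hPp1, hP1]
    · exact hPpeven i h1 hi
  have hQpodd' : ∀ i, i ≤ N → Qp (2 * i) =
      Polynomial.C (∏ t ∈ Finset.range i, b t)⁻¹ *
        (Q (i + 1) * Polynomial.C ((P i).eval 0) - Q i * Polynomial.C ((P (i + 1)).eval 0)) := by
    intro i hi
    rcases Nat.eq_zero_or_pos i with h0 | h1
    · subst h0; simp [hQp0, hQ0, hQ1, hP0, hP1]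
    · exact hQpodd i h1 hi
  have hQpeven' : ∀ i, i ≤ N → Qp (2 * i + 1) =
      -(Polynomial.C ((P (i + 1)).eval 0)⁻¹ * Q (i + 1)) := by
    intro i hi
    rcases Nat.eq_zero_or_pos i with h0 | h1
    · subst h0; simp [hQp1, hQ1]
    · exact hQpeven i h1 hi
  -- uniform shape of `a j`
  have haform : ∀ j, j ≤ N - 1 → ∃ c : ℝ,
      a j = Polynomial.C (d (j + 1))⁻¹ * (Polynomial.X * m (j + 1) - Polynomial.C c) := by
    intro j hj
    rcases Nat.eq_zero_or_pos j with h0 | h1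
    · subst h0; exact ⟨(l 1)⁻¹, ha0⟩
    · exact ⟨_, ha j h1 hj⟩
  -- main part
  intro i h1 h2
  obtain ⟨k, rfl⟩ : ∃ k, i = k + 1 := ⟨i - 1, by omega⟩
  have hkN : k ≤ N - 1 := by omega
  have hkN' : k ≤ N := by omega
  have e1 : 2 * (k + 1) - 1 = 2 * k + 1 := by omega
  have e2 : 2 * (k + 1) - 2 = 2 * k := by omega
  have e3 : k + 1 + 1 = k + 2 := rfl
  rw [e1, e2]
  obtain ⟨c, hac⟩ := haform k hkN
  have hPk2 : P (k + 2) =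
      Polynomial.C (d (k + 1))⁻¹ * (Polynomial.X * m (k + 1) - Polynomial.C c) * P (k + 1)
        - Polynomial.C (b k) * P k := by rw [hPrec k hkN, hac]
  have hQk2 : Q (k + 2) =
      Polynomial.C (d (k + 1))⁻¹ * (Polynomial.X * m (k + 1) - Polynomial.C c) * Q (k + 1)
        - Polynomial.C (b k) * Q k := by rw [hQrec k hkN, hac]
  have hek2 : (P (k + 2)).eval 0 =
      -((d (k + 1))⁻¹ * c * (P (k + 1)).eval 0) - b k * (P k).eval 0 := by
    rw [hPk2]
    simp only [eval_sub, eval_mul, eval_C, eval_X, zero_mul, zero_sub]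
    ring
  have he1 : (P (k + 2)).eval 0 = -((d (k + 1) * l (k + 1))⁻¹ * (P (k + 1)).eval 0) :=
    he (k + 1) (by omega) h2
  have hsq1 :
      (P (k + 1)).eval 0 * (P (k + 1)).eval 0 = (∏ t ∈ Finset.range (k + 1), b t) * d (k + 1) :=
    hsq (k + 1) (by omega) h2
  have hpi1 := hpi (k + 1) h2
  have hpi0 := hpi k hkN'
  have hbk := hbne k hkN
  have hene1 : (P (k + 1)).eval 0 ≠ 0 := hene (k + 1) (by omega) (by omega)
  have hene2 : (P (k + 2)).eval 0 ≠ 0 := hene (k + 2) (by omega) (by omega)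
  have hd1 := hd0 (k + 1) (by omega) h2
  have hl1 := hl0 (k + 1) (by omega) h2
  have s1 : ((P (k + 1)).eval 0)⁻¹ =
      (∏ t ∈ Finset.range (k + 1), b t)⁻¹ * ((d (k + 1))⁻¹ * (P (k + 1)).eval 0) := by
    field_simp
    linear_combination -hsq1
  have s2 : (∏ t ∈ Finset.range k, b t)⁻¹ =
      (∏ t ∈ Finset.range (k + 1), b t)⁻¹ * b k := by
    rw [Finset.prod_range_succ, mul_inv]
    field_simp
  have t1 : ((P (k + 2)).eval 0)⁻¹ =
      -(l (k + 1) * ((∏ t ∈ Finset.range (k + 1), b t)⁻¹ * (P (k + 1)).eval 0)) := by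
    rw [he1]
    field_simp
    linear_combination hsq1
  have t2 : ((P (k + 1)).eval 0)⁻¹ =
      -(l (k + 1) * ((∏ t ∈ Finset.range (k + 1), b t)⁻¹ * (P (k + 2)).eval 0)) := by
    rw [he1]
    field_simp
    linear_combination -hsq1
  refine ⟨⟨?_, ?_⟩, ?_, ?_⟩
  · rw [hPpodd' (k + 1) h2, hPpeven' k hkN', hPpodd' k hkN']
    rw [e3, hek2, hPk2, s1, s2]
    simp only [map_mul, map_neg, map_sub, map_add]
    ring
  · rw [hPpeven' (k + 1) h2, hPpodd' (k + 1) h2, hPpeven' k hkN']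
    rw [e3, t1, t2, he1]
    simp only [map_mul, map_neg, map_sub, map_add]
    ring
  · rw [hQpodd' (k + 1) h2, hQpeven' k hkN', hQpodd' k hkN']
    rw [e3, hek2, hQk2, s1, s2]
    simp only [map_mul, map_neg, map_sub, map_add]
    ring
  · rw [hQpeven' (k + 1) h2, hQpodd' (k + 1) h2, hQpeven' k hkN']
    rw [e3, t1, t2, he1]
    simp only [map_mul, map_neg, map_sub, map_add]
    ring

end
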